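/- Under the stated proximal-iterate hypotheses, the limit direction satisfies Gᵀδλ + Aᵀδv = 0. -/
import Mathlib

open Matrix Filter Topology

private lemma tendsto_mulVec' {p r : ℕ} (M : Matrix (Fin p) (Fin r) ℝ)
    {x : ℕ → Fin r → ℝ} {a : Fin r → ℝ} (hx : Tendsto x atTop (𝓝 a)) :
    Tendsto (fun k => M.mulVec (x k)) atTop (𝓝 (M.mulVec a)) :=
  ((M.mulVecLin.continuous_of_finiteDimensional).tendsto a).comp hx

private lemma tendsto_dot' {p : ℕ} {u w : ℕ → Fin p → ℝ} {a c : Fin p → ℝ}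
    (hu : Tendsto u atTop (𝓝 a)) (hw : Tendsto w atTop (𝓝 c)) :
    Tendsto (fun k => u k ⬝ᵥ w k) atTop (𝓝 (a ⬝ᵥ c)) := by
  simp only [dotProduct]
  exact tendsto_finset_sum _ fun i _ =>
    (((continuous_apply i).tendsto a).comp hu).mul (((continuous_apply i).tendsto c).comp hw)


open Matrix Filter Topology

/-- Under the proximal-iterate hypotheses, `Gᵀδλ + Aᵀδv = 0`. -/
theorem prox_limit_direction_dual_kernel (n m q : ℕ)
    (H : Matrix (Fin n) (Fin n) ℝ) (hH : H.PosSemidef)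
    (f : Fin n → ℝ) (G : Matrix (Fin m) (Fin n) ℝ) (h : Fin m → ℝ)
    (A : Matrix (Fin q) (Fin n) ℝ) (b : Fin q → ℝ)
    (σ : ℝ) (hσ : 0 < σ)
    (z : ℕ → Fin n → ℝ) (lam : ℕ → Fin m → ℝ) (v : ℕ → Fin q → ℝ)
    (heq1 : ∀ k : ℕ, H.mulVec (z (k + 1)) + f + Gᵀ.mulVec (lam (k + 1)) +
      Aᵀ.mulVec (v (k + 1)) + σ • (z (k + 1) - z k) = 0)
    (heq2 : ∀ k : ℕ, h - G.mulVec (z (k + 1)) + σ • (lam (k + 1) - lam k) = 0)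
    (heq3 : ∀ k : ℕ, (b - A.mulVec (z (k + 1)) + σ • (v (k + 1) - v k)) ⬝ᵥ v (k + 1) = 0)
    (heq4 : ∀ k : ℕ, 0 ≤ v (k + 1))
    (heq5 : ∀ k : ℕ, 0 ≤ b - A.mulVec (z (k + 1)) + σ • (v (k + 1) - v k))
    (δz : Fin n → ℝ) (δlam : Fin m → ℝ) (δv : Fin q → ℝ)
    (hd1 : Tendsto (fun k => z (k + 1) - z k) atTop (𝓝 δz))
    (hd2 : Tendsto (fun k => lam (k + 1) - lam k) atTop (𝓝 δlam))
    (hd3 : Tendsto (fun k => v (k + 1) - v k) atTop (𝓝 δv))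
    (ha1 : Tendsto (fun k : ℕ => (1 / (k : ℝ)) • z k) atTop (𝓝 δz))
    (ha2 : Tendsto (fun k : ℕ => (1 / (k : ℝ)) • lam k) atTop (𝓝 δlam))
    (ha3 : Tendsto (fun k : ℕ => (1 / (k : ℝ)) • v k) atTop (𝓝 δv)) :
    Gᵀ.mulVec δlam + Aᵀ.mulVec δv = 0 := by
  have hk0 : Tendsto (fun k : ℕ => 1 / (k : ℝ)) atTop (𝓝 0) := tendsto_one_div_atTop_nhds_zero_nat
  -- shifted averages
  have ha1' : Tendsto (fun k : ℕ => (1/(k:ℝ)) • z (k+1)) atTop (𝓝 δz) := by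
    have e : (fun k : ℕ => (1/(k:ℝ)) • z (k+1)) =
        fun k : ℕ => (1/(k:ℝ)) • z k + (1/(k:ℝ)) • (z (k+1) - z k) := by
      funext k; rw [← smul_add]; congr 1; abel
    rw [e]; simpa using ha1.add (hk0.smul hd1)
  have ha3' : Tendsto (fun k : ℕ => (1/(k:ℝ)) • v (k+1)) atTop (𝓝 δv) := by
    have e : (fun k : ℕ => (1/(k:ℝ)) • v (k+1)) =
        fun k : ℕ => (1/(k:ℝ)) • v k + (1/(k:ℝ)) • (v (k+1) - v k) := by
      funext k; rw [← smul_add]; congr 1; abel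
    rw [e]; simpa using ha3.add (hk0.smul hd3)
  -- G δz = 0
  have hGδz : G.mulVec δz = 0 := by
    have h1 : Tendsto (fun k : ℕ => G.mulVec ((1/(k:ℝ)) • z (k+1))) atTop (𝓝 (G.mulVec δz)) :=
      tendsto_mulVec' G ha1'
    have h2 : Tendsto (fun k : ℕ => G.mulVec ((1/(k:ℝ)) • z (k+1))) atTop (𝓝 0) := by
      have e : ∀ k : ℕ, G.mulVec ((1/(k:ℝ)) • z (k+1))
          = (1/(k:ℝ)) • (h + σ • (lam (k+1) - lam k)) := by
        intro k
        have e2 : (h + σ • (lam (k+1) - lam k)) - G.mulVec (z (k+1)) = 0 := by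
          rw [← heq2 k]; abel
        rw [mulVec_smul, ← sub_eq_zero.mp e2]
      simp only [e]
      simpa using hk0.smul (tendsto_const_nhds.add (hd2.const_smul σ))
    exact tendsto_nhds_unique h1 h2
  -- (A δz) ⬝ᵥ δv = 0
  have hAdot : (A.mulVec δz) ⬝ᵥ δv = 0 := by
    have hs : Tendsto (fun k : ℕ =>
        (1/(k:ℝ)) • (b - A.mulVec (z (k+1)) + σ • (v (k+1) - v k)))
        atTop (𝓝 (-(A.mulVec δz))) := by
      have e : ∀ k : ℕ, (1/(k:ℝ)) • (b - A.mulVec (z (k+1)) + σ • (v (k+1) - v k))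
          = (1/(k:ℝ)) • b - A.mulVec ((1/(k:ℝ)) • z (k+1)) + (1/(k:ℝ)) • (σ • (v (k+1) - v k)) := by
        intro k; rw [mulVec_smul]; simp only [smul_add, smul_sub]
      simp only [e]
      have := ((hk0.smul (tendsto_const_nhds : Tendsto (fun _ : ℕ => b) atTop (𝓝 b))).sub
        (tendsto_mulVec' A ha1')).add (hk0.smul (hd3.const_smul σ))
      simpa using this
    have hdotlim : Tendsto (fun k : ℕ =>
        ((1/(k:ℝ)) • (b - A.mulVec (z (k+1)) + σ • (v (k+1) - v k))) ⬝ᵥ ((1/(k:ℝ)) • v (k+1)))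
        atTop (𝓝 ((-(A.mulVec δz)) ⬝ᵥ δv)) := tendsto_dot' hs ha3'
    have hzero : Tendsto (fun k : ℕ =>
        ((1/(k:ℝ)) • (b - A.mulVec (z (k+1)) + σ • (v (k+1) - v k))) ⬝ᵥ ((1/(k:ℝ)) • v (k+1)))
        atTop (𝓝 0) := by
      have e : ∀ k : ℕ,
          ((1/(k:ℝ)) • (b - A.mulVec (z (k+1)) + σ • (v (k+1) - v k))) ⬝ᵥ ((1/(k:ℝ)) • v (k+1))
          = 0 := by
        intro k
        rw [smul_dotProduct, dotProduct_smul, heq3 k]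
        simp
      simp only [e]; exact tendsto_const_nhds
    have := tendsto_nhds_unique hdotlim hzero
    simpa [neg_dotProduct, neg_eq_zero] using this
  -- key equation : H δz + Gᵀ δlam + Aᵀ δv = 0
  have key : H.mulVec δz + Gᵀ.mulVec δlam + Aᵀ.mulVec δv = 0 := by
    have h2 : Tendsto (fun k : ℕ => (1/(k:ℝ)) • (H.mulVec (z (k + 1)) + f
        + Gᵀ.mulVec (lam (k + 1)) + Aᵀ.mulVec (v (k + 1)) + σ • (z (k + 1) - z k)))
        atTop (𝓝 0) := by
      have e : ∀ k : ℕ, (1/(k:ℝ)) • (H.mulVec (z (k + 1)) + f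
          + Gᵀ.mulVec (lam (k + 1)) + Aᵀ.mulVec (v (k + 1)) + σ • (z (k + 1) - z k))
          = 0 := by
        intro k; rw [heq1 k, smul_zero]
      simp only [e]; exact tendsto_const_nhds
    have ha2' : Tendsto (fun k : ℕ => (1/(k:ℝ)) • lam (k+1)) atTop (𝓝 δlam) := by
      have e : (fun k : ℕ => (1/(k:ℝ)) • lam (k+1)) =
          fun k : ℕ => (1/(k:ℝ)) • lam k + (1/(k:ℝ)) • (lam (k+1) - lam k) := by
        funext k; rw [← smul_add]; congr 1; abel
      rw [e]; simpa using ha2.add (hk0.smul hd2)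
    have h1 : Tendsto (fun k : ℕ => (1/(k:ℝ)) • (H.mulVec (z (k + 1)) + f
        + Gᵀ.mulVec (lam (k + 1)) + Aᵀ.mulVec (v (k + 1)) + σ • (z (k + 1) - z k)))
        atTop (𝓝 (H.mulVec δz + Gᵀ.mulVec δlam + Aᵀ.mulVec δv)) := by
      have e : ∀ k : ℕ, (1/(k:ℝ)) • (H.mulVec (z (k + 1)) + f
          + Gᵀ.mulVec (lam (k + 1)) + Aᵀ.mulVec (v (k + 1)) + σ • (z (k + 1) - z k))
          = H.mulVec ((1/(k:ℝ)) • z (k+1)) + (1/(k:ℝ)) • f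
          + Gᵀ.mulVec ((1/(k:ℝ)) • lam (k+1)) + Aᵀ.mulVec ((1/(k:ℝ)) • v (k+1))
          + (1/(k:ℝ)) • (σ • (z (k+1) - z k)) := by
        intro k; rw [mulVec_smul, mulVec_smul, mulVec_smul]
        simp only [smul_add]
      simp only [e]
      have := (((((tendsto_mulVec' H ha1').add
        (hk0.smul (tendsto_const_nhds : Tendsto (fun _ : ℕ => f) atTop (𝓝 f)))).add
        (tendsto_mulVec' Gᵀ ha2')).add
        (tendsto_mulVec' Aᵀ ha3')).add (hk0.smul (hd1.const_smul σ)))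
      simpa using this
    exact tendsto_nhds_unique h1 h2
  -- dot key with δz
  have hdot := congrArg (fun w => δz ⬝ᵥ w) key
  simp only [dotProduct_add, dotProduct_zero] at hdot
  rw [Matrix.dotProduct_mulVec δz Gᵀ, Matrix.dotProduct_mulVec δz Aᵀ,
    vecMul_transpose, vecMul_transpose, hGδz, zero_dotProduct, hAdot] at hdot
  have hHδz : H.mulVec δz = 0 := by
    have := (hH.dotProduct_mulVec_zero_iff δz).mp (by simpa using hdot)
    exact this
  rw [hHδz, zero_add] at key
  exact key
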